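/- Degenerate Poincaré inequality (Fubini version): if a satisfies the degeneracy assumptions with μ < 2 and u is locally absolutely continuous on (0,1] with u(1) = 0 and ∫₀¹ a(x)|u'(x)|² dx < ∞, then ∫₀¹ |u(x)|² dx ≤ (1/(a(1)(2-μ))) · ∫₀¹ a(x)|u'(x)|² dx. -/

import Mathlib

open MeasureTheory Set

lemma amin_aux (a ad : ℝ → ℝ) (μ : ℝ)
    (hcont : ContinuousOn a (Set.Icc 0 1))
    (hderiv : ∀ x ∈ Set.Ioc (0:ℝ) 1, HasDerivAt a (ad x) x)
    (hμ : ∀ x ∈ Set.Ioc (0:ℝ) 1, x * |ad x| ≤ μ * a x)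
    (hpos : ∀ x ∈ Set.Ioc (0:ℝ) 1, 0 < a x) :
    ∀ x ∈ Set.Ioc (0:ℝ) 1, a 1 * x ^ μ ≤ a x := by
  intro x hx
  obtain ⟨hx0, hx1⟩ := hx
  set g : ℝ → ℝ := fun t => a t * t ^ (-μ) with hg
  have hanti : AntitoneOn g (Set.Icc x 1) := by
    apply antitoneOn_of_deriv_nonpos (convex_Icc x 1)
    · apply ContinuousOn.mul
      · exact hcont.mono (Icc_subset_Icc hx0.le le_rfl)
      · exact ContinuousOn.rpow_const continuousOn_id
          (fun t ht => Or.inl (ne_of_gt (lt_of_lt_of_le hx0 ht.1)))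
    · rw [interior_Icc]
      intro t ht
      have ht0 : (0:ℝ) < t := hx0.trans ht.1
      exact (((hderiv t ⟨ht0, ht.2.le⟩).mul
        (Real.hasDerivAt_rpow_const (Or.inl ht0.ne'))).differentiableAt).differentiableWithinAt
    · rw [interior_Icc]
      intro t ht
      have ht0 : (0:ℝ) < t := hx0.trans ht.1
      have htm : t ∈ Set.Ioc (0:ℝ) 1 := ⟨ht0, ht.2.le⟩
      have hder : HasDerivAt g (ad t * t ^ (-μ) + a t * (-μ * t ^ (-μ - 1))) t :=
        (hderiv t htm).mul (Real.hasDerivAt_rpow_const (Or.inl ht0.ne'))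
      rw [hder.deriv]
      have h1 : t ^ (-μ) = t * t ^ (-μ - 1) := by
        rw [Real.rpow_sub ht0, Real.rpow_one]; field_simp
      have h2 : t ^ (-μ - 1) ≥ 0 := Real.rpow_nonneg ht0.le _
      have h3 : t * ad t ≤ μ * a t := le_trans (by
        have := abs_nonneg (ad t)
        nlinarith [le_abs_self (ad t), ht0.le]) (hμ t htm)
      calc ad t * t ^ (-μ) + a t * (-μ * t ^ (-μ - 1))
          = (t * ad t - μ * a t) * t ^ (-μ - 1) := by rw [h1]; ring
        _ ≤ 0 := mul_nonpos_of_nonpos_of_nonneg (by linarith) h2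
  have h := hanti (Set.left_mem_Icc.2 hx1) (Set.right_mem_Icc.2 hx1) hx1
  -- h : g 1 ≤ g x
  have h1 : g 1 = a 1 := by simp [hg, Real.one_rpow]
  have hxμ : (0:ℝ) < x ^ μ := Real.rpow_pos_of_pos hx0 μ
  have hxneg : x ^ (-μ) * x ^ μ = 1 := by
    rw [← Real.rpow_add hx0]; simp
  rw [h1] at h
  calc a 1 * x ^ μ ≤ (a x * x ^ (-μ)) * x ^ μ := by
        apply mul_le_mul_of_nonneg_right h hxμ.le
    _ = a x := by rw [mul_assoc, hxneg, mul_one]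


lemma H_aux (μ : ℝ) (hμ0 : 0 ≤ μ) (hμ2 : μ < 2) :
    IntegrableOn (fun x => ∫ t in Set.Ioo x 1, t ^ (-μ)) (Set.Ioo (0:ℝ) 1) ∧
    ∫ x in Set.Ioo (0:ℝ) 1, (∫ t in Set.Ioo x 1, t ^ (-μ)) = 1 / (2 - μ) := by
  set H : ℝ → ℝ := fun x => ∫ t in Set.Ioo x 1, t ^ (-μ) with hH
  have h2μ : (0:ℝ) < 2 - μ := by linarith
  have hint : ∀ x : ℝ, 0 < x → IntegrableOn (fun t => t ^ (-μ)) (Set.Ioo x 1) := by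
    intro x hx0
    refine (ContinuousOn.integrableOn_Icc ?_).mono_set Set.Ioo_subset_Icc_self
    exact ContinuousOn.rpow_const continuousOn_id
      (fun t ht => Or.inl (ne_of_gt (lt_of_lt_of_le hx0 ht.1)))
  have hnn : ∀ x : ℝ, 0 < x → ∀ t ∈ Set.Ioo x 1, (0:ℝ) ≤ t ^ (-μ) := by
    intro x hx0 t ht
    exact Real.rpow_nonneg (le_of_lt (hx0.trans ht.1)) _
  have hHnn : ∀ x : ℝ, 0 < x → 0 ≤ H x := fun x hx0 =>
    setIntegral_nonneg measurableSet_Ioo (hnn x hx0)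
  have hanti : AntitoneOn H (Set.Ioo (0:ℝ) 1) := by
    intro x hx y hy hxy
    exact setIntegral_mono_set (hint x hx.1)
      ((ae_restrict_iff' measurableSet_Ioo).2 (ae_of_all _ (hnn x hx.1)))
      (HasSubset.Subset.eventuallyLE (Set.Ioo_subset_Ioo_left hxy))
  have hm : AEMeasurable H (volume.restrict (Set.Ioo (0:ℝ) 1)) :=
    aemeasurable_restrict_of_antitoneOn measurableSet_Ioo hanti
  -- the double lintegral
  set F : ℝ × ℝ → ENNReal := fun p =>
    Set.indicator {q : ℝ × ℝ | q.1 < q.2} (fun q => ENNReal.ofReal (q.2 ^ (-μ))) p with hF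
  have hFm : Measurable F := by
    apply Measurable.indicator
    · fun_prop
    · exact measurableSet_lt measurable_fst measurable_snd
  have key : ∫⁻ x in Set.Ioo (0:ℝ) 1, ENNReal.ofReal (H x)
      = ENNReal.ofReal (1 / (2 - μ)) := by
    have step1 : ∫⁻ x in Set.Ioo (0:ℝ) 1, ENNReal.ofReal (H x)
        = ∫⁻ x in Set.Ioo (0:ℝ) 1, ∫⁻ t in Set.Ioo (0:ℝ) 1, F (x, t) := by
      apply setLIntegral_congr_fun measurableSet_Ioo
      intro x hx
      beta_reduce
      have e1 : ENNReal.ofReal (H x) = ∫⁻ t in Set.Ioo x 1, ENNReal.ofReal (t ^ (-μ)) :=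
        ofReal_integral_eq_lintegral_ofReal (hint x hx.1)
          ((ae_restrict_iff' measurableSet_Ioo).2 (ae_of_all _ (hnn x hx.1)))
      rw [e1]
      have e2 : (fun t => F (x, t)) =
          Set.indicator (Set.Ioi x) (fun t => ENNReal.ofReal (t ^ (-μ))) := by
        ext t
        simp only [hF, Set.indicator, Set.mem_setOf_eq, Set.mem_Ioi]
      have e3 : ∫⁻ t in Set.Ioo (0:ℝ) 1, F (x, t)
          = ∫⁻ t in Set.Ioi x ∩ Set.Ioo (0:ℝ) 1, ENNReal.ofReal (t ^ (-μ)) := by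
        simp_rw [e2]
        rw [lintegral_indicator measurableSet_Ioi,
          Measure.restrict_restrict measurableSet_Ioi]
      have e5 : Set.Ioi x ∩ Set.Ioo (0:ℝ) 1 = Set.Ioo x 1 := by
        ext t
        simp only [Set.mem_inter_iff, Set.mem_Ioi, Set.mem_Ioo]
        constructor
        · rintro ⟨h1, _, h3⟩; exact ⟨h1, h3⟩
        · rintro ⟨h1, h2⟩; exact ⟨h1, hx.1.trans h1, h2⟩
      rw [e3, e5]
    have step2 : ∫⁻ x in Set.Ioo (0:ℝ) 1, ∫⁻ t in Set.Ioo (0:ℝ) 1, F (x, t)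
        = ∫⁻ t in Set.Ioo (0:ℝ) 1, ∫⁻ x in Set.Ioo (0:ℝ) 1, F (x, t) := by
      exact lintegral_lintegral_swap (hFm.aemeasurable)
    have step3 : ∫⁻ t in Set.Ioo (0:ℝ) 1, ∫⁻ x in Set.Ioo (0:ℝ) 1, F (x, t)
        = ∫⁻ t in Set.Ioo (0:ℝ) 1, ENNReal.ofReal (t ^ (1 - μ)) := by
      apply setLIntegral_congr_fun measurableSet_Ioo
      intro t ht
      beta_reduce
      have e2 : (fun x => F (x, t)) =
          Set.indicator (Set.Iio t) (fun _ => ENNReal.ofReal (t ^ (-μ))) := by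
        ext x
        simp only [hF, Set.indicator, Set.mem_setOf_eq, Set.mem_Iio]
      rw [e2, lintegral_indicator measurableSet_Iio,
        Measure.restrict_restrict measurableSet_Iio, setLIntegral_const]
      have e4 : Set.Iio t ∩ Set.Ioo (0:ℝ) 1 = Set.Ioo 0 t := by
        ext x
        simp only [Set.mem_inter_iff, Set.mem_Iio, Set.mem_Ioo]
        constructor
        · rintro ⟨h1, h2, _⟩; exact ⟨h2, h1⟩
        · rintro ⟨h1, h2⟩; exact ⟨h2, h1, h2.trans ht.2⟩
      rw [e4, Real.volume_Ioo, sub_zero, ← ENNReal.ofReal_mul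
        (Real.rpow_nonneg ht.1.le _)]
      congr 1
      rw [show (1:ℝ) - μ = -μ + 1 by ring, Real.rpow_add ht.1, Real.rpow_one]
    have hint2 : IntegrableOn (fun t : ℝ => t ^ (1 - μ)) (Set.Ioo (0:ℝ) 1) := by
      have := intervalIntegral.intervalIntegrable_rpow' (a := 0) (b := 1)
        (r := 1 - μ) (by linarith)
      exact (intervalIntegrable_iff_integrableOn_Ioo_of_le zero_le_one).1 this
    have step4 : ∫⁻ t in Set.Ioo (0:ℝ) 1, ENNReal.ofReal (t ^ (1 - μ))
        = ENNReal.ofReal (∫ t in Set.Ioo (0:ℝ) 1, t ^ (1 - μ)) := by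
      refine (ofReal_integral_eq_lintegral_ofReal hint2 ?_).symm
      exact (ae_restrict_iff' measurableSet_Ioo).2
        (ae_of_all _ (fun t ht => Real.rpow_nonneg ht.1.le _))
    have hval : ∫ t in Set.Ioo (0:ℝ) 1, t ^ (1 - μ) = 1 / (2 - μ) := by
      rw [← integral_Ioc_eq_integral_Ioo, ← intervalIntegral.integral_of_le zero_le_one]
      rw [integral_rpow (Or.inl (by linarith))]
      rw [Real.one_rpow, Real.zero_rpow (by linarith : (1:ℝ) - μ + 1 ≠ 0)]
      norm_num
      ring_nf
    rw [step1, step2, step3, step4, hval]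
  have hnnae : 0 ≤ᵐ[volume.restrict (Set.Ioo (0:ℝ) 1)] H :=
    (ae_restrict_iff' measurableSet_Ioo).2 (ae_of_all _ (fun x hx => hHnn x hx.1))
  have hInt : IntegrableOn H (Set.Ioo (0:ℝ) 1) := by
    refine ⟨hm.aestronglyMeasurable, ?_⟩
    rw [hasFiniteIntegral_iff_ofReal hnnae, key]
    exact ENNReal.ofReal_lt_top
  refine ⟨hInt, ?_⟩
  rw [integral_eq_lintegral_of_nonneg_ae hnnae hm.aestronglyMeasurable, key,
    ENNReal.toReal_ofReal (by positivity)]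

lemma pw_aux (a ad : ℝ → ℝ) (μ : ℝ)
    (hcont : ContinuousOn a (Set.Icc 0 1))
    (hpos : ∀ x ∈ Set.Ioc (0:ℝ) 1, 0 < a x)
    (u ud : ℝ → ℝ)
    (huderiv : ∀ x ∈ Set.Ioc (0:ℝ) 1, HasDerivAt u (ud x) x)
    (hu1 : u 1 = 0)
    (hud2 : MeasureTheory.IntegrableOn (fun x => a x * (ud x) ^ 2) (Set.Ioo 0 1))
    (amin : ∀ x ∈ Set.Ioc (0:ℝ) 1, a 1 * x ^ μ ≤ a x)
    (x : ℝ) (hx : x ∈ Set.Ioo (0:ℝ) 1) :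
    u x ^ 2 ≤ (1 / a 1) * (∫ y in Set.Ioo (0:ℝ) 1, a y * (ud y) ^ 2)
      * (∫ t in Set.Ioo x 1, t ^ (-μ)) := by
  have a1pos : 0 < a 1 := hpos 1 ⟨one_pos, le_rfl⟩
  have hsub : Set.Ioo x 1 ⊆ Set.Ioc (0:ℝ) 1 :=
    fun t ht => ⟨hx.1.trans ht.1, ht.2.le⟩
  have hudmeas : AEStronglyMeasurable ud (volume.restrict (Set.Ioo x 1)) := by
    refine ((measurable_deriv u).aestronglyMeasurable.restrict).congr ?_
    exact (ae_restrict_iff' measurableSet_Ioo).2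
      (ae_of_all _ (fun t ht => (huderiv t (hsub ht)).deriv))
  -- minimum of a on [x,1]
  obtain ⟨t0, ht0mem, ht0min⟩ := (isCompact_Icc (a := x) (b := 1)).exists_isMinOn
    (Set.nonempty_Icc.2 hx.2.le) (hcont.mono (Set.Icc_subset_Icc hx.1.le le_rfl))
  have ht0pos : 0 < a t0 := hpos t0 ⟨hx.1.trans_le ht0mem.1, ht0mem.2⟩
  have hmin : ∀ t ∈ Set.Ioo x 1, a t0 ≤ a t :=
    fun t ht => ht0min (Set.Ioo_subset_Icc_self ht)
  -- integrability of a ud^2 on Ioo x 1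
  have haud2 : IntegrableOn (fun t => a t * ud t ^ 2) (Set.Ioo x 1) :=
    hud2.mono_set (fun t ht => ⟨hx.1.trans ht.1, ht.2⟩)
  have haudnn : ∀ t ∈ Set.Ioo x 1, 0 ≤ a t * ud t ^ 2 :=
    fun t ht => mul_nonneg (hpos t (hsub ht)).le (sq_nonneg _)
  have hudsqm : AEStronglyMeasurable (fun t => ud t ^ 2) (volume.restrict (Set.Ioo x 1)) :=
    (hudmeas.mul hudmeas).congr (ae_of_all _ (fun t => (sq (ud t)).symm))
  have hudsq : IntegrableOn (fun t => ud t ^ 2) (Set.Ioo x 1) := by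
    refine Integrable.mono' (haud2.const_mul (a t0)⁻¹) hudsqm ?_
    refine (ae_restrict_iff' measurableSet_Ioo).2 (ae_of_all _ (fun t ht => ?_))
    rw [Real.norm_eq_abs, abs_of_nonneg (sq_nonneg _)]
    calc ud t ^ 2 = (a t0)⁻¹ * (a t0 * ud t ^ 2) := by field_simp
      _ ≤ (a t0)⁻¹ * (a t * ud t ^ 2) := by
          apply mul_le_mul_of_nonneg_left _ (inv_nonneg.2 ht0pos.le)
          exact mul_le_mul_of_nonneg_right (hmin t ht) (sq_nonneg _)
  have hudint : IntegrableOn ud (Set.Ioo x 1) := by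
    have hone : IntegrableOn (fun _ : ℝ => (1:ℝ)) (Set.Ioo x 1) :=
      integrableOn_const (C := (1:ℝ)) measure_Ioo_lt_top.ne
    have hbound : IntegrableOn (fun t => ud t ^ 2 + 1) (Set.Ioo x 1) := hudsq.add hone
    refine Integrable.mono' hbound hudmeas (ae_of_all _ (fun t => ?_))
    rw [Real.norm_eq_abs]
    nlinarith [sq_nonneg (|ud t| - 1), sq_abs (ud t)]
  -- FTC
  have hftc : ∫ t in x..1, ud t = u 1 - u x := by
    apply intervalIntegral.integral_eq_sub_of_hasDerivAt
    · intro t ht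
      rw [Set.uIcc_of_le hx.2.le] at ht
      exact huderiv t ⟨hx.1.trans_le ht.1, ht.2⟩
    · exact (intervalIntegrable_iff_integrableOn_Ioo_of_le hx.2.le).2 hudint
  have hux : u x = -∫ t in Set.Ioo x 1, ud t := by
    rw [← integral_Ioc_eq_integral_Ioo, ← intervalIntegral.integral_of_le hx.2.le, hftc, hu1]
    ring
  -- Cauchy-Schwarz setup
  set f : ℝ → ℝ := fun t => t ^ (-μ/2) with hfdef
  set g : ℝ → ℝ := fun t => t ^ (μ/2) * |ud t| with hgdef
  have r2 : ∀ y : ℝ, y ^ (2:ℝ) = y ^ 2 := fun y => by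
    rw [show (2:ℝ) = ((2:ℕ):ℝ) by norm_num, Real.rpow_natCast]
  have hfg : ∀ t ∈ Set.Ioo x 1, |ud t| = f t * g t := by
    intro t ht
    have ht0 : (0:ℝ) < t := hx.1.trans ht.1
    rw [hfdef, hgdef]
    simp only
    rw [← mul_assoc, ← Real.rpow_add ht0, show -μ/2 + μ/2 = 0 by ring,
      Real.rpow_zero, one_mul]
  have hfcont : ContinuousOn f (Set.Icc x 1) :=
    ContinuousOn.rpow_const continuousOn_id
      (fun t ht => Or.inl (ne_of_gt (hx.1.trans_le ht.1)))
  have hgc : ContinuousOn (fun t : ℝ => t ^ (μ/2)) (Set.Icc x 1) :=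
    ContinuousOn.rpow_const continuousOn_id
      (fun t ht => Or.inl (ne_of_gt (hx.1.trans_le ht.1)))
  have hfm : AEStronglyMeasurable f (volume.restrict (Set.Ioo x 1)) :=
    ((hfcont.mono Set.Ioo_subset_Icc_self).aestronglyMeasurable measurableSet_Ioo)
  have habs : AEStronglyMeasurable (fun t => |ud t|) (volume.restrict (Set.Ioo x 1)) :=
    hudmeas.norm.congr (ae_of_all _ (fun t => (Real.norm_eq_abs (ud t))))
  have hgm : AEStronglyMeasurable g (volume.restrict (Set.Ioo x 1)) :=
    (((hgc.mono Set.Ioo_subset_Icc_self).aestronglyMeasurable measurableSet_Ioo)).mul habs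
  have hf2eq : ∀ t ∈ Set.Ioo x 1, f t ^ 2 = t ^ (-μ) := by
    intro t ht
    have ht0 : (0:ℝ) < t := hx.1.trans ht.1
    rw [hfdef]
    simp only
    rw [← Real.rpow_natCast (t ^ (-μ/2)) 2, ← Real.rpow_mul ht0.le]
    norm_num
  have hg2eq : ∀ t ∈ Set.Ioo x 1, g t ^ 2 = t ^ μ * ud t ^ 2 := by
    intro t ht
    have ht0 : (0:ℝ) < t := hx.1.trans ht.1
    rw [hgdef]
    simp only
    rw [mul_pow, sq_abs, ← Real.rpow_natCast (t ^ (μ/2)) 2, ← Real.rpow_mul ht0.le]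
    norm_num
  have hrint : IntegrableOn (fun t : ℝ => t ^ (-μ)) (Set.Ioo x 1) := by
    refine (ContinuousOn.integrableOn_Icc ?_).mono_set Set.Ioo_subset_Icc_self
    exact ContinuousOn.rpow_const continuousOn_id
      (fun t ht => Or.inl (ne_of_gt (hx.1.trans_le ht.1)))
  have hf2int : IntegrableOn (fun t => f t ^ 2) (Set.Ioo x 1) :=
    hrint.congr_fun (fun t ht => (hf2eq t ht).symm) measurableSet_Ioo
  have htmubd : ∀ t ∈ Set.Ioo x 1, t ^ μ * ud t ^ 2 ≤ (a 1)⁻¹ * (a t * ud t ^ 2) := by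
    intro t ht
    have hle : a 1 * t ^ μ ≤ a t := amin t (hsub ht)
    calc t ^ μ * ud t ^ 2 = (a 1)⁻¹ * ((a 1 * t ^ μ) * ud t ^ 2) := by field_simp
      _ ≤ (a 1)⁻¹ * (a t * ud t ^ 2) := by
          apply mul_le_mul_of_nonneg_left _ (inv_nonneg.2 a1pos.le)
          exact mul_le_mul_of_nonneg_right hle (sq_nonneg _)
  have htmu_m : AEStronglyMeasurable (fun t => t ^ μ * ud t ^ 2)
      (volume.restrict (Set.Ioo x 1)) := by
    refine AEStronglyMeasurable.mul ?_ hudsqm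
    exact ContinuousOn.aestronglyMeasurable
      (ContinuousOn.rpow_const continuousOn_id
        (fun t ht => Or.inl (ne_of_gt (hx.1.trans ht.1)))) measurableSet_Ioo
  have htmu_int : IntegrableOn (fun t => t ^ μ * ud t ^ 2) (Set.Ioo x 1) := by
    refine Integrable.mono' (haud2.const_mul (a 1)⁻¹) htmu_m ?_
    refine (ae_restrict_iff' measurableSet_Ioo).2 (ae_of_all _ (fun t ht => ?_))
    have ht0 : (0:ℝ) < t := hx.1.trans ht.1
    rw [Real.norm_eq_abs, abs_of_nonneg (mul_nonneg (Real.rpow_nonneg ht0.le μ) (sq_nonneg _))]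
    exact htmubd t ht
  have hg2int : IntegrableOn (fun t => g t ^ 2) (Set.Ioo x 1) :=
    htmu_int.congr_fun (fun t ht => (hg2eq t ht).symm) measurableSet_Ioo
  -- Hölder
  have hpq : Real.HolderConjugate 2 2 := Real.holderConjugate_iff.mpr ⟨one_lt_two, by norm_num⟩
  have hof2 : ENNReal.ofReal (2:ℝ) = (2 : ENNReal) := by norm_num
  have hmemf : MemLp f (ENNReal.ofReal (2:ℝ)) (volume.restrict (Set.Ioo x 1)) := by
    rw [hof2]
    exact (memLp_two_iff_integrable_sq hfm).2 hf2int
  have hmemg : MemLp g (ENNReal.ofReal (2:ℝ)) (volume.restrict (Set.Ioo x 1)) := by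
    rw [hof2]
    exact (memLp_two_iff_integrable_sq hgm).2 hg2int
  have hfnn : 0 ≤ᵐ[volume.restrict (Set.Ioo x 1)] f :=
    (ae_restrict_iff' measurableSet_Ioo).2 (ae_of_all _
      (fun t ht => Real.rpow_nonneg (hx.1.trans ht.1).le _))
  have hgnn : 0 ≤ᵐ[volume.restrict (Set.Ioo x 1)] g :=
    (ae_restrict_iff' measurableSet_Ioo).2 (ae_of_all _
      (fun t ht => mul_nonneg (Real.rpow_nonneg (hx.1.trans ht.1).le _) (abs_nonneg _)))
  have hHolder := MeasureTheory.integral_mul_le_Lp_mul_Lq_of_nonneg hpq hfnn hgnn hmemf hmemg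
  -- convert rpow 2 to pow 2 inside
  have hA : ∫ t in Set.Ioo x 1, f t ^ (2:ℝ) = ∫ t in Set.Ioo x 1, t ^ (-μ) := by
    refine setIntegral_congr_fun measurableSet_Ioo (fun t ht => ?_)
    rw [r2, hf2eq t ht]
  have hB : ∫ t in Set.Ioo x 1, g t ^ (2:ℝ) = ∫ t in Set.Ioo x 1, t ^ μ * ud t ^ 2 := by
    refine setIntegral_congr_fun measurableSet_Ioo (fun t ht => ?_)
    rw [r2, hg2eq t ht]
  have hHnn : 0 ≤ ∫ t in Set.Ioo x 1, t ^ (-μ) :=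
    setIntegral_nonneg measurableSet_Ioo (fun t ht => Real.rpow_nonneg (hx.1.trans ht.1).le _)
  have hBbd : ∫ t in Set.Ioo x 1, t ^ μ * ud t ^ 2
      ≤ (a 1)⁻¹ * ∫ y in Set.Ioo (0:ℝ) 1, a y * ud y ^ 2 := by
    calc ∫ t in Set.Ioo x 1, t ^ μ * ud t ^ 2
        ≤ ∫ t in Set.Ioo x 1, (a 1)⁻¹ * (a t * ud t ^ 2) :=
          setIntegral_mono_on htmu_int (haud2.const_mul _) measurableSet_Ioo htmubd
      _ = (a 1)⁻¹ * ∫ t in Set.Ioo x 1, a t * ud t ^ 2 := by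
          rw [integral_const_mul]
      _ ≤ (a 1)⁻¹ * ∫ y in Set.Ioo (0:ℝ) 1, a y * ud y ^ 2 := by
          apply mul_le_mul_of_nonneg_left _ (inv_nonneg.2 a1pos.le)
          refine setIntegral_mono_set hud2 ?_ ?_
          · exact (ae_restrict_iff' measurableSet_Ioo).2 (ae_of_all _
              (fun y hy => mul_nonneg (hpos y ⟨hy.1, hy.2.le⟩).le (sq_nonneg _)))
          · exact HasSubset.Subset.eventuallyLE (fun t ht => ⟨hx.1.trans ht.1, ht.2⟩)
  have heq1 : ∫ t in Set.Ioo x 1, |ud t| = ∫ t in Set.Ioo x 1, f t * g t :=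
    setIntegral_congr_fun measurableSet_Ioo (fun t ht => hfg t ht)
  have hsq : ∀ P : ℝ, 0 ≤ P → (P ^ ((1:ℝ)/2)) ^ 2 = P := fun P hP => by
    rw [← Real.rpow_natCast (P ^ ((1:ℝ)/2)) 2, ← Real.rpow_mul hP]; norm_num
  have hAnn : 0 ≤ ∫ t in Set.Ioo x 1, f t ^ (2:ℝ) := by rw [hA]; exact hHnn
  have hBnn : 0 ≤ ∫ t in Set.Ioo x 1, g t ^ (2:ℝ) := by
    rw [hB]
    exact setIntegral_nonneg measurableSet_Ioo (fun t ht =>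
      mul_nonneg (Real.rpow_nonneg (hx.1.trans ht.1).le _) (sq_nonneg _))
  calc u x ^ 2 = |∫ t in Set.Ioo x 1, ud t| ^ 2 := by rw [hux, neg_sq, sq_abs]
    _ ≤ (∫ t in Set.Ioo x 1, f t * g t) ^ 2 := by
        apply pow_le_pow_left₀ (abs_nonneg _)
        rw [← heq1]
        have hnorm := norm_integral_le_integral_norm (μ := volume.restrict (Set.Ioo x 1)) ud
        simpa [Real.norm_eq_abs] using hnorm
    _ ≤ ((∫ t in Set.Ioo x 1, f t ^ (2:ℝ)) ^ ((1:ℝ)/2)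
          * (∫ t in Set.Ioo x 1, g t ^ (2:ℝ)) ^ ((1:ℝ)/2)) ^ 2 := by
        apply pow_le_pow_left₀ _ hHolder
        rw [← heq1]
        exact setIntegral_nonneg measurableSet_Ioo (fun t _ => abs_nonneg _)
    _ = (∫ t in Set.Ioo x 1, f t ^ (2:ℝ)) * (∫ t in Set.Ioo x 1, g t ^ (2:ℝ)) := by
        rw [mul_pow, hsq _ hAnn, hsq _ hBnn]
    _ ≤ (∫ t in Set.Ioo x 1, t ^ (-μ))
          * ((a 1)⁻¹ * ∫ y in Set.Ioo (0:ℝ) 1, a y * ud y ^ 2) := by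
        rw [hA, hB]
        exact mul_le_mul_of_nonneg_left hBbd hHnn
    _ = (1 / a 1) * (∫ y in Set.Ioo (0:ℝ) 1, a y * ud y ^ 2)
          * (∫ t in Set.Ioo x 1, t ^ (-μ)) := by
        rw [one_div]; ring

theorem degenerate_poincare_fubini
    (a ad : ℝ → ℝ) (μ : ℝ)
    (hcont : ContinuousOn a (Set.Icc 0 1))
    (hderiv : ∀ x ∈ Set.Ioc (0:ℝ) 1, HasDerivAt a (ad x) x)
    (hpos : ∀ x ∈ Set.Ioc (0:ℝ) 1, 0 < a x)
    (ha0 : a 0 = 0)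
    (hμ0 : 0 ≤ μ) (hμ2 : μ < 2)
    (hμ : ∀ x ∈ Set.Ioc (0:ℝ) 1, x * |ad x| ≤ μ * a x)
    (u ud : ℝ → ℝ)
    (hu2 : MeasureTheory.IntegrableOn (fun x => (u x) ^ 2) (Set.Ioo 0 1))
    (huderiv : ∀ x ∈ Set.Ioc (0:ℝ) 1, HasDerivAt u (ud x) x)
    (hu1 : u 1 = 0)
    (hud2 : MeasureTheory.IntegrableOn (fun x => a x * (ud x) ^ 2) (Set.Ioo 0 1)) :
    ∫ x in Set.Ioo (0:ℝ) 1, (u x) ^ 2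
      ≤ (1 / (a 1 * (2 - μ))) * ∫ x in Set.Ioo (0:ℝ) 1, a x * (ud x) ^ 2 := by
  have a1pos : 0 < a 1 := hpos 1 ⟨one_pos, le_rfl⟩
  have h2μ : (0:ℝ) < 2 - μ := by linarith
  have amin := amin_aux a ad μ hcont hderiv hμ hpos
  obtain ⟨hHint, hHval⟩ := H_aux μ hμ0 hμ2
  set I := ∫ y in Set.Ioo (0:ℝ) 1, a y * ud y ^ 2 with hI
  have hpw : ∀ x ∈ Set.Ioo (0:ℝ) 1,
      u x ^ 2 ≤ (1 / a 1) * I * (∫ t in Set.Ioo x 1, t ^ (-μ)) :=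
    fun x hx => pw_aux a ad μ hcont hpos u ud huderiv hu1 hud2 amin x hx
  have hmono : ∫ x in Set.Ioo (0:ℝ) 1, u x ^ 2
      ≤ ∫ x in Set.Ioo (0:ℝ) 1, (1 / a 1) * I * (∫ t in Set.Ioo x 1, t ^ (-μ)) :=
    setIntegral_mono_on hu2 (hHint.const_mul ((1 / a 1) * I)) measurableSet_Ioo hpw
  have hval : ∫ x in Set.Ioo (0:ℝ) 1, (1 / a 1) * I * (∫ t in Set.Ioo x 1, t ^ (-μ))
      = (1 / a 1) * I * (1 / (2 - μ)) := by
    rw [integral_const_mul, hHval]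
  have heq : (1 / a 1) * I * (1 / (2 - μ)) = (1 / (a 1 * (2 - μ))) * I := by
    field_simp
  rw [hval, heq] at hmono
  exact hmono
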